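/- Let {Π_ξ} be a finite family of nonzero positive semidefinite operators on ℂ^d with Σ_ξ tr(Π_ξ) = d, and let ℘ = (1/d) Σ_ξ tr(Π_ξ²)/tr(Π_ξ) be its purity. Then Σ_{ξ,η} [tr(Π_ξΠ_η)]² / (tr(Π_ξ)tr(Π_η)) ≥ (d²(1+℘²) − 2d℘)/(d²−1), with equality if and only if Σ_ξ (Π_ξ⊗Π_ξ)/tr(Π_ξ) = ((1+℘)/(d+1)) P₊ + ((1−℘)/(d−1)) P₋ (i.e., {Π_ξ} is a generalized 2-design). -/

import Mathlib

open Matrix Kronecker ComplexOrder BigOperators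

/-- The swap operator `V` on `ℂ^d ⊗ ℂ^d`, `V(x ⊗ y) = y ⊗ x`. -/
noncomputable def swapOp (d : ℕ) : Matrix (Fin d × Fin d) (Fin d × Fin d) ℂ :=
  fun p q => if p.1 = q.2 ∧ p.2 = q.1 then 1 else 0

/-- Projector onto the symmetric subspace of `ℂ^d ⊗ ℂ^d`. -/
noncomputable def Pplus (d : ℕ) : Matrix (Fin d × Fin d) (Fin d × Fin d) ℂ :=
  (2 : ℂ)⁻¹ • (1 + swapOp d)

/-- Projector onto the antisymmetric subspace of `ℂ^d ⊗ ℂ^d`. -/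
noncomputable def Pminus (d : ℕ) : Matrix (Fin d × Fin d) (Fin d × Fin d) ℂ :=
  (2 : ℂ)⁻¹ • (1 - swapOp d)

/-- Partial trace over the first tensor factor. -/
noncomputable def ptr1 {d : ℕ} (Q : Matrix (Fin d × Fin d) (Fin d × Fin d) ℂ) :
    Matrix (Fin d) (Fin d) ℂ :=
  fun j k => ∑ i, Q (i, j) (i, k)

/-- Partial trace over the second tensor factor. -/
noncomputable def ptr2 {d : ℕ} (Q : Matrix (Fin d × Fin d) (Fin d × Fin d) ℂ) :
    Matrix (Fin d) (Fin d) ℂ :=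
  fun i j => ∑ k, Q (i, k) (j, k)

lemma swap_conjT (d : ℕ) : (swapOp d)ᴴ = swapOp d := by
  ext ⟨i,j⟩ ⟨k,l⟩
  simp [swapOp, conjTranspose_apply, and_comm, eq_comm]

lemma swap_mul_swap (d : ℕ) : swapOp d * swapOp d = 1 := by
  ext ⟨i,j⟩ ⟨k,l⟩
  simp only [swapOp, mul_apply, Fintype.sum_prod_type, one_apply, ite_and]
  simp [Prod.ext_iff, Finset.sum_ite_eq, eq_comm, and_comm]
  rw [ite_and]

lemma trace_swap (d : ℕ) : (swapOp d).trace = (d : ℂ) := by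
  simp only [swapOp, trace, diag, Fintype.sum_prod_type]
  simp [Finset.sum_ite_eq, eq_comm]

lemma trace_kron_swap {d : ℕ} (M N : Matrix (Fin d) (Fin d) ℂ) :
    ((M ⊗ₖ N) * swapOp d).trace = (M * N).trace := by
  simp only [swapOp, trace, diag, mul_apply, Fintype.sum_prod_type, kroneckerMap_apply, ite_and,
    mul_ite, mul_one, mul_zero]
  have : ∀ x x1 : Fin d, (∑ x_2 : Fin d, ∑ x_3 : Fin d,
      if x_2 = x1 then if x_3 = x then M x x_2 * N x1 x_3 else 0 else 0) = M x x1 * N x1 x := by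
    intro x x1
    rw [Finset.sum_comm]
    simp [Finset.sum_ite_eq']
  simp only [this, mul_apply]

lemma kron_conjT {d : ℕ} (M N : Matrix (Fin d) (Fin d) ℂ) :
    (M ⊗ₖ N)ᴴ = Mᴴ ⊗ₖ Nᴴ := by
  ext ⟨i,j⟩ ⟨k,l⟩
  simp [conjTranspose_apply, kroneckerMap_apply, mul_comm]

lemma trace_conjT_mul {m : Type*} [Fintype m] (G : Matrix m m ℂ) :
    (Gᴴ * G).trace = ((∑ j, ∑ i, Complex.normSq (G i j) : ℝ) : ℂ) := by
  simp only [trace, diag, mul_apply, conjTranspose_apply]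
  push_cast
  refine Finset.sum_congr rfl fun j _ => Finset.sum_congr rfl fun i _ => ?_
  rw [Complex.star_def, mul_comm, Complex.mul_conj]

lemma trace_sq_nonneg {m : Type*} [Fintype m] {G : Matrix m m ℂ} (hG : Gᴴ = G) :
    0 ≤ (G * G).trace := by
  rw [show G * G = Gᴴ * G by rw [hG], trace_conjT_mul]
  exact Complex.zero_le_real.mpr (Finset.sum_nonneg fun j _ =>
    Finset.sum_nonneg fun i _ => Complex.normSq_nonneg _)

lemma trace_sq_eq_zero_iff {m : Type*} [Fintype m] {G : Matrix m m ℂ} (hG : Gᴴ = G) :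
    (G * G).trace = 0 ↔ G = 0 := by
  rw [show G * G = Gᴴ * G by rw [hG], trace_conjT_mul]
  rw [Complex.ofReal_eq_zero, Finset.sum_eq_zero_iff_of_nonneg
    (fun j _ => Finset.sum_nonneg fun i _ => Complex.normSq_nonneg _)]
  constructor
  · intro h
    ext i j
    have := (Finset.sum_eq_zero_iff_of_nonneg
      (fun i _ => Complex.normSq_nonneg (G i j))).mp (h j (Finset.mem_univ j)) i (Finset.mem_univ i)
    simpa [Complex.normSq_eq_zero] using this
  · intro h; simp [h]

set_option maxHeartbeats 1600000 in
/-- For a finite family of nonzero positive semidefinite operators on `ℂ^d`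
with `Σ_ξ tr(E_ξ) = d` and purity `p = (1/d) Σ_ξ tr(E_ξ²)/tr(E_ξ)`,
`Σ_{ξ,η} [tr(E_ξE_η)]²/(tr E_ξ tr E_η) ≥ (d²(1+p²) − 2dp)/(d²−1)`, with equality iff the
family is a generalized 2-design. -/
theorem stmt12 {d n : ℕ} (hd : 2 ≤ d) (E : Fin n → Matrix (Fin d) (Fin d) ℂ)
    (hE : ∀ ξ, (E ξ).PosSemidef) (hE0 : ∀ ξ, E ξ ≠ 0)
    (htr : ∑ ξ, (E ξ).trace = (d : ℂ))
    (p : ℂ) (hp : p = (d : ℂ)⁻¹ * ∑ ξ, (E ξ * E ξ).trace / (E ξ).trace) :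
    ((d : ℂ) ^ 2 * (1 + p ^ 2) - 2 * d * p) / ((d : ℂ) ^ 2 - 1)
      ≤ ∑ ξ, ∑ η, ((E ξ * E η).trace) ^ 2 / ((E ξ).trace * (E η).trace) ∧
    (∑ ξ, ∑ η, ((E ξ * E η).trace) ^ 2 / ((E ξ).trace * (E η).trace)
        = ((d : ℂ) ^ 2 * (1 + p ^ 2) - 2 * d * p) / ((d : ℂ) ^ 2 - 1)
      ↔ ∑ ξ, ((E ξ).trace)⁻¹ • (E ξ ⊗ₖ E ξ)
          = ((1 + p) / ((d : ℂ) + 1)) • Pplus d + ((1 - p) / ((d : ℂ) - 1)) • Pminus d) := by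
  -- basic nonvanishing facts
  have hd0 : (d : ℂ) ≠ 0 := by
    exact_mod_cast Nat.cast_ne_zero.mpr (by omega)
  have hdm1 : (d : ℂ) - 1 ≠ 0 := by
    intro h
    have : (d : ℂ) = 1 := by linear_combination h
    exact (by omega : d ≠ 1) (by exact_mod_cast this)
  have hdp1 : (d : ℂ) + 1 ≠ 0 := by
    intro h
    have : ((d + 1 : ℕ) : ℂ) = 0 := by push_cast; linear_combination h
    exact (by omega : d + 1 ≠ 0) (by exact_mod_cast this)
  have hd2 : (d : ℂ) ^ 2 - 1 ≠ 0 := by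
    intro h
    have : ((d : ℂ) - 1) * ((d : ℂ) + 1) = 0 := by linear_combination h
    rcases mul_eq_zero.mp this with h' | h'
    · exact hdm1 h'
    · exact hdp1 h'
  -- reality facts
  have htrreal : ∀ ξ, star (E ξ).trace = (E ξ).trace := by
    intro ξ
    rw [← trace_conjTranspose, (hE ξ).1]
  have htr2real : ∀ ξ, star (E ξ * E ξ).trace = (E ξ * E ξ).trace := by
    intro ξ
    rw [← trace_conjTranspose, conjTranspose_mul, (hE ξ).1]
  have hpreal : star p = p := by
    rw [hp]
    simp only [star_mul', star_inv₀, star_sum, star_div₀]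
    rw [show star ((d : ℂ)) = (d : ℂ) by simp]
    congr 1
    refine Finset.sum_congr rfl fun ξ _ => ?_
    rw [htrreal, htr2real]
  -- notation
  set V := swapOp d with hV
  set F := ∑ ξ, ((E ξ).trace)⁻¹ • (E ξ ⊗ₖ E ξ) with hF
  set S := ∑ ξ, ∑ η, ((E ξ * E η).trace) ^ 2 / ((E ξ).trace * (E η).trace) with hS
  set c : ℂ := ((d : ℂ) ^ 2 * (1 + p ^ 2) - 2 * d * p) / ((d : ℂ) ^ 2 - 1) with hc
  set a : ℂ := ((d : ℂ) - p) / ((d : ℂ) ^ 2 - 1) with ha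
  set b : ℂ := (p * (d : ℂ) - 1) / ((d : ℂ) ^ 2 - 1) with hb
  set G : Matrix (Fin d × Fin d) (Fin d × Fin d) ℂ :=
    F - a • (1 : Matrix (Fin d × Fin d) (Fin d × Fin d) ℂ) - b • V with hG
  -- trace computations
  have hFF : (F * F).trace = S := by
    rw [hF, Finset.sum_mul_sum, hS]
    rw [trace_sum]
    refine Finset.sum_congr rfl fun ξ _ => ?_
    rw [trace_sum]
    refine Finset.sum_congr rfl fun η _ => ?_
    rw [Matrix.smul_mul, Matrix.mul_smul, trace_smul, trace_smul, ← mul_kronecker_mul,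
      trace_kronecker]
    rw [smul_eq_mul, smul_eq_mul, division_def, mul_inv, sq]
    ring
  have hFtr : F.trace = (d : ℂ) := by
    rw [hF, trace_sum, ← htr]
    refine Finset.sum_congr rfl fun ξ _ => ?_
    rw [trace_smul, trace_kronecker, smul_eq_mul]
    rcases eq_or_ne (E ξ).trace 0 with h | h
    · simp [h]
    · field_simp
  have hFV : (F * V).trace = (d : ℂ) * p := by
    rw [hF, Finset.sum_mul, trace_sum]
    have : ∀ ξ : Fin n, ((((E ξ).trace)⁻¹ • (E ξ ⊗ₖ E ξ)) * V).trace
        = (E ξ * E ξ).trace / (E ξ).trace := by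
      intro ξ
      rw [Matrix.smul_mul, trace_smul, hV, trace_kron_swap, smul_eq_mul, division_def, mul_comm]
    rw [Finset.sum_congr rfl fun ξ _ => this ξ]
    rw [hp]
    field_simp
  have hVF : (V * F).trace = (d : ℂ) * p := by
    rw [trace_mul_comm, hFV]
  have hVV : (V * V).trace = (d : ℂ) ^ 2 := by
    rw [hV, swap_mul_swap]
    simp [trace_one, Fintype.card_prod]
    ring
  have hVtr : V.trace = (d : ℂ) := trace_swap d
  have h1tr : (1 : Matrix (Fin d × Fin d) (Fin d × Fin d) ℂ).trace = (d : ℂ) ^ 2 := by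
    simp [trace_one, Fintype.card_prod]
    ring
  -- Hermiticity
  have hFherm : Fᴴ = F := by
    rw [hF, conjTranspose_sum]
    refine Finset.sum_congr rfl fun ξ _ => ?_
    rw [conjTranspose_smul, kron_conjT, (hE ξ).1, star_inv₀, htrreal]
  have hareal : star a = a := by
    rw [ha]
    simp [star_div₀, hpreal]
  have hbreal : star b = b := by
    rw [hb]
    simp [star_div₀, hpreal]
  have hGherm : Gᴴ = G := by
    rw [hG, conjTranspose_sub, conjTranspose_sub, conjTranspose_smul, conjTranspose_smul,
      conjTranspose_one, hFherm, swap_conjT, hareal, hbreal]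
  -- the key trace identity
  have hGG : (G * G).trace = S - c := by
    have expand : (G * G).trace
        = (F * F).trace - a * F.trace - b * (V * F).trace - a * F.trace
          + a * a * (1 : Matrix (Fin d × Fin d) (Fin d × Fin d) ℂ).trace + a * b * V.trace
          - b * (F * V).trace + b * a * V.trace + b * b * (V * V).trace := by
      rw [hG]
      simp only [Matrix.sub_mul, Matrix.mul_sub, Matrix.smul_mul, Matrix.mul_smul,
        Matrix.one_mul, Matrix.mul_one, trace_sub, trace_smul, smul_smul, smul_eq_mul]
      ring
    rw [expand, hFF, hFtr, hFV, hVF, hVV, hVtr, h1tr]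
    rw [hc, ha, hb]
    field_simp
    ring
  -- the equality of the design condition with F = a•1 + b•V
  have hQ : ((1 + p) / ((d : ℂ) + 1)) • Pplus d + ((1 - p) / ((d : ℂ) - 1)) • Pminus d
      = a • (1 : Matrix (Fin d × Fin d) (Fin d × Fin d) ℂ) + b • V := by
    rw [Pplus, Pminus, smul_smul, smul_smul, smul_add, smul_sub]
    have hca : (1 + p) / ((d : ℂ) + 1) * (2 : ℂ)⁻¹ + (1 - p) / ((d : ℂ) - 1) * (2 : ℂ)⁻¹ = a := by
      rw [ha]
      field_simp
      ring
    have hcb : (1 + p) / ((d : ℂ) + 1) * (2 : ℂ)⁻¹ - (1 - p) / ((d : ℂ) - 1) * (2 : ℂ)⁻¹ = b := by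
      rw [hb]
      field_simp
      ring
    rw [← hca, ← hcb, add_smul, sub_smul, hV]
    abel
  constructor
  · have h0 := trace_sq_nonneg hGherm
    rw [hGG] at h0
    exact sub_nonneg.mp h0
  · rw [hQ]
    constructor
    · intro hSc
      have : (G * G).trace = 0 := by rw [hGG, hSc]; ring
      have hG0 := (trace_sq_eq_zero_iff hGherm).mp this
      rw [hG, sub_sub, sub_eq_zero] at hG0
      exact hG0
    · intro hFQ
      have hG0 : G = 0 := by
        rw [hG, sub_sub, sub_eq_zero]
        exact hFQ
      have h2 := (trace_sq_eq_zero_iff hGherm).mpr hG0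
      rw [hGG] at h2
      exact sub_eq_zero.mp h2
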